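/- Let n ≥ 1, let Q be an n×n real symmetric positive definite matrix, and let a_1, a_2, a_3, a_4 > 0 satisfy (a_3 a_4 / a_2)·λ > 1 and ((a_3 a_4 / a_2) − (a_1 a_4² / a_2²))·λ > 1 for every eigenvalue λ of Q. Let A be the 4n×4n block matrix with block rows (0, I_n, 0, 0), (0, 0, I_n, 0), (0, 0, 0, I_n), (−a_1 Q, −a_2 Q, −a_3 Q, −a_4 Q). Define M = (a_3 a_4 − a_1 a_4²/a_2) Q − a_2 I_n, F = (1/(2 a_1)) Q⁻² ((a_3 a_4 / a_2) Q − I_n) M⁻¹, G = (a_4/(2 a_2)) Q⁻¹ M⁻¹, J = (1/2) Q⁻¹ M⁻¹, K = (1/2)(a_3 − a_1 a_4/a_2) M⁻¹, and let P be the 4n×4n block matrix [[F, 0, −G, 0], [0, G, 0, −J], [−G, 0, J, 0], [0, −J, 0, K]]. Then P satisfies the Lyapunov equation A P + P Aᵀ + diag(0_n, 0_n, 0_n, I_n) = 0, and the trace of the top-left n×n block of P equals (1/(2 a_1 a_2))·tr( Q⁻² ((a_3 a_4 / a_2) Q − I_n) (((a_3 a_4 / a_2) − (a_1 a_4² / a_2²))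 Q − I_n)⁻¹ ). -/

import Mathlib

open Matrix Polynomial

/-- Block matrix with `k × k` blocks, each an `n × n` real matrix. -/
def Mblk {k n : ℕ} (B : Fin k → Fin k → Matrix (Fin n) (Fin n) ℝ) :
    Matrix (Fin k × Fin n) (Fin k × Fin n) ℝ :=
  Matrix.of fun x y => B x.1 y.1 x.2 y.2

lemma Mblk_mul {k n : ℕ} (B C : Fin k → Fin k → Matrix (Fin n) (Fin n) ℝ) :
    Mblk B * Mblk C = Mblk (fun i j => ∑ m, B i m * C m j) := by
  ext ⟨i,p⟩ ⟨j,q⟩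
  simp [Mblk, Matrix.mul_apply, Fintype.sum_prod_type, Matrix.sum_apply]

lemma Mblk_add {k n : ℕ} (B C : Fin k → Fin k → Matrix (Fin n) (Fin n) ℝ) :
    Mblk B + Mblk C = Mblk (fun i j => B i j + C i j) := by
  ext ⟨i,p⟩ ⟨j,q⟩; simp [Mblk]

lemma Mblk_transpose {k n : ℕ} (B : Fin k → Fin k → Matrix (Fin n) (Fin n) ℝ) :
    (Mblk B)ᵀ = Mblk (fun i j => (B j i)ᵀ) := by
  ext ⟨i,p⟩ ⟨j,q⟩; simp [Mblk]

lemma Mblk_eq_zero {k n : ℕ} (B : Fin k → Fin k → Matrix (Fin n) (Fin n) ℝ)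
    (h : ∀ i j, B i j = 0) : Mblk B = 0 := by
  ext ⟨i,p⟩ ⟨j,q⟩; simp [Mblk, h]

lemma charpoly_eval {n : ℕ} (Q : Matrix (Fin n) (Fin n) ℝ) (t : ℝ) :
    Q.charpoly.eval t = (t • (1 : Matrix (Fin n) (Fin n) ℝ) - Q).det := by
  rw [Matrix.charpoly, _root_.eval_det, matPolyEquiv_charmatrix]
  simp
  congr 1
  ext i j
  simp [Matrix.smul_apply, Matrix.one_apply, Matrix.scalar_apply, Matrix.diagonal]

set_option maxHeartbeats 2000000 in
theorem fourthOrder_lyapunov (n : ℕ) (hn : 1 ≤ n)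
    (Q : Matrix (Fin n) (Fin n) ℝ) (hQ : Q.PosDef)
    (a₁ a₂ a₃ a₄ : ℝ) (ha₁ : 0 < a₁) (ha₂ : 0 < a₂) (ha₃ : 0 < a₃) (ha₄ : 0 < a₄)
    (heig : ∀ lam ∈ Q.charpoly.roots,
      1 < (a₃ * a₄ / a₂) * lam ∧
      1 < ((a₃ * a₄ / a₂) - (a₁ * a₄ ^ 2 / a₂ ^ 2)) * lam) :
    let A : Matrix (Fin 4 × Fin n) (Fin 4 × Fin n) ℝ :=
      Mblk ![![0, 1, 0, 0], ![0, 0, 1, 0], ![0, 0, 0, 1],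
        ![-(a₁ • Q), -(a₂ • Q), -(a₃ • Q), -(a₄ • Q)]]
    let M : Matrix (Fin n) (Fin n) ℝ :=
      (a₃ * a₄ - a₁ * a₄ ^ 2 / a₂) • Q - a₂ • (1 : Matrix (Fin n) (Fin n) ℝ)
    let F : Matrix (Fin n) (Fin n) ℝ :=
      (1 / (2 * a₁)) • (Q⁻¹ * Q⁻¹ *
        ((a₃ * a₄ / a₂) • Q - (1 : Matrix (Fin n) (Fin n) ℝ)) * M⁻¹)
    let G : Matrix (Fin n) (Fin n) ℝ := (a₄ / (2 * a₂)) • (Q⁻¹ * M⁻¹)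
    let J : Matrix (Fin n) (Fin n) ℝ := (1 / 2 : ℝ) • (Q⁻¹ * M⁻¹)
    let K : Matrix (Fin n) (Fin n) ℝ := ((1 / 2) * (a₃ - a₁ * a₄ / a₂)) • M⁻¹
    let P : Matrix (Fin 4 × Fin n) (Fin 4 × Fin n) ℝ :=
      Mblk ![![F, 0, -G, 0], ![0, G, 0, -J], ![-G, 0, J, 0], ![0, -J, 0, K]]
    A * P + P * Aᵀ +
        Mblk ![![0, 0, 0, 0], ![0, 0, 0, 0], ![0, 0, 0, 0], ![0, 0, 0, 1]] = 0 ∧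
      Matrix.trace (Matrix.of fun p q : Fin n => P (0, p) (0, q)) =
        (1 / (2 * a₁ * a₂)) *
          Matrix.trace (Q⁻¹ * Q⁻¹ *
            ((a₃ * a₄ / a₂) • Q - (1 : Matrix (Fin n) (Fin n) ℝ)) *
            (((a₃ * a₄ / a₂) - (a₁ * a₄ ^ 2 / a₂ ^ 2)) • Q -
              (1 : Matrix (Fin n) (Fin n) ℝ))⁻¹) := by
  intro A M F G J K P
  have h1 : a₁ ≠ 0 := ha₁.ne'
  have h2 : a₂ ≠ 0 := ha₂.ne'
  set c : ℝ := (a₃ * a₄ / a₂) - (a₁ * a₄ ^ 2 / a₂ ^ 2) with hc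
  set d : ℝ := a₃ * a₄ / a₂ with hd
  set N : Matrix (Fin n) (Fin n) ℝ := c • Q - 1 with hN
  have hQd : IsUnit Q.det := isUnit_iff_ne_zero.2 hQ.det_pos.ne'
  -- N is invertible
  have hNd : IsUnit N.det := by
    rcases eq_or_ne c 0 with h | h
    · rw [hN, h]
      simp [Matrix.det_neg]
    · rw [isUnit_iff_ne_zero]
      intro hdet
      have hNe : N = c • (Q - c⁻¹ • (1 : Matrix (Fin n) (Fin n) ℝ)) := by
        rw [hN, smul_sub, smul_smul, mul_inv_cancel₀ h, one_smul]
      rw [hNe, Matrix.det_smul, show Q - c⁻¹ • (1 : Matrix (Fin n) (Fin n) ℝ)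
          = -(c⁻¹ • (1 : Matrix (Fin n) (Fin n) ℝ) - Q) from (neg_sub _ _).symm,
        Matrix.det_neg, ← charpoly_eval] at hdet
      have hev : Q.charpoly.eval c⁻¹ = 0 := by
        rcases mul_eq_zero.1 hdet with h' | h'
        · exact absurd h' (pow_ne_zero _ h)
        · rcases mul_eq_zero.1 h' with h'' | h''
          · exact absurd h'' (pow_ne_zero _ (by norm_num))
          · exact h''
      have hroot : c⁻¹ ∈ Q.charpoly.roots := by
        rw [Polynomial.mem_roots (Q.charpoly_monic.ne_zero)]
        exact hev
      have := (heig c⁻¹ hroot).2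
      rw [mul_inv_cancel₀ h] at this
      exact lt_irrefl 1 this
  -- basic inverse facts
  have hQQ : Q * Q⁻¹ = 1 := Matrix.mul_nonsing_inv Q hQd
  have hQQ' : Q⁻¹ * Q = 1 := Matrix.nonsing_inv_mul Q hQd
  have hNN : N * N⁻¹ = 1 := Matrix.mul_nonsing_inv N hNd
  have hNN' : N⁻¹ * N = 1 := Matrix.nonsing_inv_mul N hNd
  -- M = a₂ • N and M⁻¹ = a₂⁻¹ • N⁻¹
  have hMN : M = a₂ • N := by
    show (a₃ * a₄ - a₁ * a₄ ^ 2 / a₂) • Q - a₂ • (1 : Matrix (Fin n) (Fin n) ℝ) = a₂ • N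
    rw [hN, smul_sub, smul_smul]
    congr 2
    rw [hc, hd]
    field_simp
  have hMinv : M⁻¹ = a₂⁻¹ • N⁻¹ := by
    apply Matrix.inv_eq_right_inv
    rw [hMN, smul_mul_smul_comm, hNN, mul_inv_cancel₀ h2, one_smul]
  have hMM : M * M⁻¹ = 1 := by
    rw [hMinv, hMN, smul_mul_smul_comm, hNN, mul_inv_cancel₀ h2, one_smul]
  have hMM' : M⁻¹ * M = 1 := by
    rw [hMinv, hMN, smul_mul_smul_comm, hNN', inv_mul_cancel₀ h2, one_smul]
  -- commutation
  have hQN : Q * N = N * Q := by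
    rw [hN]
    simp only [Matrix.mul_sub, Matrix.sub_mul, mul_smul_comm, smul_mul_assoc,
      Matrix.mul_one, Matrix.one_mul]
  have hQMi : Q * M⁻¹ = M⁻¹ * Q := by
    have : Q * N⁻¹ = N⁻¹ * Q := by
      calc Q * N⁻¹ = N⁻¹ * N * Q * N⁻¹ := by rw [hNN', Matrix.one_mul]
        _ = N⁻¹ * (Q * N) * N⁻¹ := by rw [hQN]; noncomm_ring
        _ = N⁻¹ * Q * (N * N⁻¹) := by noncomm_ring
        _ = N⁻¹ * Q := by rw [hNN, Matrix.mul_one]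
    rw [hMinv, mul_smul_comm, smul_mul_assoc, this]
  have hQiMi : Q⁻¹ * M⁻¹ = M⁻¹ * Q⁻¹ := by
    calc Q⁻¹ * M⁻¹ = Q⁻¹ * M⁻¹ * (Q * Q⁻¹) := by rw [hQQ, Matrix.mul_one]
      _ = Q⁻¹ * (M⁻¹ * Q) * Q⁻¹ := by noncomm_ring
      _ = Q⁻¹ * Q * (M⁻¹ * Q⁻¹) := by rw [← hQMi]; noncomm_ring
      _ = M⁻¹ * Q⁻¹ := by rw [hQQ', Matrix.one_mul]
  -- transposes
  have hQT : Qᵀ = Q := hQ.isHermitian.eq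
  have hQiT : (Q⁻¹)ᵀ = Q⁻¹ := by rw [Matrix.transpose_nonsing_inv, hQT]
  have hMT : Mᵀ = M := by
    show ((a₃ * a₄ - a₁ * a₄ ^ 2 / a₂) • Q - a₂ • (1 : Matrix (Fin n) (Fin n) ℝ))ᵀ = _
    rw [Matrix.transpose_sub, Matrix.transpose_smul, Matrix.transpose_smul,
      Matrix.transpose_one, hQT]
  have hMiT : (M⁻¹)ᵀ = M⁻¹ := by rw [Matrix.transpose_nonsing_inv, hMT]
  -- normal forms of products with Q
  have hF : F = (1 / (2 * a₁)) • (Q⁻¹ * Q⁻¹ * (d • Q - 1) * M⁻¹) := rfl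
  have hG : G = (a₄ / (2 * a₂)) • (Q⁻¹ * M⁻¹) := rfl
  have hJ : J = (1 / 2 : ℝ) • (Q⁻¹ * M⁻¹) := rfl
  have hK : K = ((1 / 2) * (a₃ - a₁ * a₄ / a₂)) • M⁻¹ := rfl
  have hQG : Q * G = (a₄ / (2 * a₂)) • M⁻¹ := by
    rw [hG, mul_smul_comm, ← Matrix.mul_assoc, hQQ, Matrix.one_mul]
  have hQJ : Q * J = (1 / 2 : ℝ) • M⁻¹ := by
    rw [hJ, mul_smul_comm, ← Matrix.mul_assoc, hQQ, Matrix.one_mul]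
  have hQK : Q * K = ((1 / 2) * (a₃ - a₁ * a₄ / a₂)) • (Q * M⁻¹) := by
    rw [hK, mul_smul_comm]
  have hW : Q⁻¹ * (d • Q - 1) = d • 1 - Q⁻¹ := by
    rw [Matrix.mul_sub, Matrix.mul_one, mul_smul_comm, hQQ']
  have hQF : Q * F = (1 / (2 * a₁)) • (d • M⁻¹ - Q⁻¹ * M⁻¹) := by
    rw [hF, mul_smul_comm]
    congr 1
    simp only [Matrix.mul_assoc]
    rw [← Matrix.mul_assoc Q Q⁻¹, hQQ, Matrix.one_mul, ← Matrix.mul_assoc, hW,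
      Matrix.sub_mul, smul_mul_assoc, Matrix.one_mul]
  -- commutation of Q with the blocks
  have hcQ : ∀ X : Matrix (Fin n) (Fin n) ℝ, Q * X = X * Q → ∀ (r : ℝ), Q * (r • X) = (r • X) * Q :=
    fun X hX r => by rw [mul_smul_comm, smul_mul_assoc, hX]
  have hGQ : G * Q = Q * G := by
    rw [hG, mul_smul_comm, smul_mul_assoc, Matrix.mul_assoc, ← hQMi,
      ← Matrix.mul_assoc, hQQ', Matrix.one_mul, ← Matrix.mul_assoc, hQQ, Matrix.one_mul]
  have hJQ : J * Q = Q * J := by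
    rw [hJ, mul_smul_comm, smul_mul_assoc, Matrix.mul_assoc, ← hQMi,
      ← Matrix.mul_assoc, hQQ', Matrix.one_mul, ← Matrix.mul_assoc, hQQ, Matrix.one_mul]
  have hKQ : K * Q = Q * K := by
    rw [hK, mul_smul_comm, smul_mul_assoc, hQMi]
  have cQQi : Commute Q Q⁻¹ := by
    show Q * Q⁻¹ = Q⁻¹ * Q
    rw [hQQ, hQQ']
  have cQMi : Commute Q M⁻¹ := hQMi
  have cQW : Commute Q (d • Q - 1) :=
    (((Commute.refl Q).smul_right d).sub_right (Commute.one_right Q))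
  have hFQ : F * Q = Q * F :=
    (((((cQQi.mul_right cQQi).mul_right cQW).mul_right cQMi).smul_right
      (1 / (2 * a₁))).eq.trans (by rw [hF])).symm.trans (by rw [hF])
  have hA : A = Mblk ![![0, 1, 0, 0], ![0, 0, 1, 0], ![0, 0, 0, 1],
      ![-(a₁ • Q), -(a₂ • Q), -(a₃ • Q), -(a₄ • Q)]] := rfl
  have hP : P = Mblk ![![F, 0, -G, 0], ![0, G, 0, -J], ![-G, 0, J, 0], ![0, -J, 0, K]] := rfl
  have hP00 : (Matrix.of fun p q : Fin n => P (0, p) (0, q)) = F := rfl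
  have hone : (1 : Matrix (Fin n) (Fin n) ℝ)
      = (a₃ * a₄ - a₁ * a₄ ^ 2 / a₂) • (Q * M⁻¹) - a₂ • M⁻¹ := by
    conv_lhs => rw [← hMM]
    show ((a₃ * a₄ - a₁ * a₄ ^ 2 / a₂) • Q - a₂ • (1 : Matrix (Fin n) (Fin n) ℝ)) * M⁻¹ = _
    rw [Matrix.sub_mul, smul_mul_assoc, smul_mul_assoc, Matrix.one_mul]
  clear_value A P
  clear_value F G J K
  clear_value M
  clear_value N
  clear_value c d
  refine ⟨?_, ?_⟩
  · rw [hA, hP, Mblk_transpose, Mblk_mul, Mblk_mul, Mblk_add, Mblk_add]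
    apply Mblk_eq_zero
    intro i j
    fin_cases i <;> fin_cases j <;>
      simp [Fin.sum_univ_four, hQT, smul_mul_assoc, mul_smul_comm,
        Matrix.vecHead, Matrix.vecTail]
    all_goals try simp only [hFQ, hGQ, hJQ, hKQ]
    all_goals try simp only [hQF, hQG, hQJ, hQK]
    all_goals try simp only [hJ, hK, hone]
    all_goals match_scalars
    all_goals try rw [hd]
    all_goals field_simp
    all_goals try ring
  · rw [hP00, hF, hMinv, Matrix.mul_smul, Matrix.trace_smul, Matrix.trace_smul]
    rw [smul_eq_mul, smul_eq_mul]
    field_simp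
    try ring
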